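/- Let (x_n)_{n≥0} be a sequence of real numbers with x_0 = 0, x_n > 0 for n ≥ 1, satisfying x_n(x_{n+1} + x_n + x_{n-1}) = n + ρΔ_n for all n ≥ 1, where ρ > -1 and Δ_n = (1-(-1)^n)/2. Then lim_{n→∞} x_n/√n = 1/√3. -/

import Mathlib

open Filter Topology

private lemma dPI_sqrt_succ_le {ε : ℝ} (hε : 0 < ε) :
    ∀ᶠ n : ℕ in atTop, Real.sqrt ((n : ℝ) + 1) ≤ (1 + ε) * Real.sqrt n := by
  filter_upwards [eventually_ge_atTop (Nat.ceil (ε⁻¹))] with n hn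
  have hn' : (ε : ℝ)⁻¹ ≤ n := le_trans (Nat.le_ceil _) (by exact_mod_cast hn)
  have hn0 : (0:ℝ) ≤ n := Nat.cast_nonneg n
  have h1 : (1:ℝ) ≤ ε * n := by
    have := mul_le_mul_of_nonneg_left hn' hε.le
    rwa [mul_inv_cancel₀ hε.ne'] at this
  have heq : (1 + ε) * Real.sqrt n = Real.sqrt ((1+ε)^2 * n) := by
    rw [Real.sqrt_mul (by positivity), Real.sqrt_sq (by positivity)]
  rw [heq]
  apply Real.sqrt_le_sqrt
  nlinarith [mul_nonneg (mul_nonneg hε.le hε.le) hn0]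

private lemma dPI_sqrt_pred_ge {ε : ℝ} (hε : 0 < ε) :
    ∀ᶠ n : ℕ in atTop, (1 - ε) * Real.sqrt n ≤ Real.sqrt ((n : ℝ) - 1) := by
  rcases le_or_gt 1 ε with h | h
  · filter_upwards with n
    have : (1 - ε) * Real.sqrt n ≤ 0 :=
      mul_nonpos_of_nonpos_of_nonneg (by linarith) (Real.sqrt_nonneg _)
    exact this.trans (Real.sqrt_nonneg _)
  · filter_upwards [eventually_ge_atTop (Nat.ceil (ε⁻¹))] with n hn
    have hn' : (ε : ℝ)⁻¹ ≤ n := le_trans (Nat.le_ceil _) (by exact_mod_cast hn)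
    have hn0 : (0:ℝ) ≤ n := Nat.cast_nonneg n
    have h1 : (1:ℝ) ≤ ε * n := by
      have := mul_le_mul_of_nonneg_left hn' hε.le
      rwa [mul_inv_cancel₀ hε.ne'] at this
    have heq : (1 - ε) * Real.sqrt n = Real.sqrt ((1-ε)^2 * n) := by
      rw [Real.sqrt_mul (by positivity), Real.sqrt_sq (by linarith)]
    rw [heq]
    apply Real.sqrt_le_sqrt
    nlinarith [mul_nonneg (mul_nonneg hε.le (by linarith : (0:ℝ) ≤ 1 - ε)) hn0]

set_option maxHeartbeats 1000000 in
/-- Positive solutions of the discrete Painlevé I equation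
`xₙ(xₙ₊₁ + xₙ + xₙ₋₁) = n + ρ Δₙ` with `x₀ = 0` satisfy `xₙ/√n → 1/√3`. -/
theorem dPI_asymptotics (ρ : ℝ) (hρ : ρ > -1) (x : ℕ → ℝ)
    (hx0 : x 0 = 0)
    (hpos : ∀ n, 1 ≤ n → 0 < x n)
    (hrec : ∀ n : ℕ, 1 ≤ n → x n * (x (n + 1) + x n + x (n - 1))
        = (n : ℝ) + ρ * (1 - (-1 : ℝ) ^ n) / 2) :
    Tendsto (fun n : ℕ => x n / Real.sqrt n) atTop (𝓝 (1 / Real.sqrt 3)) := by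
  have hxnn : ∀ n, 0 ≤ x n := by
    intro n
    cases n with
    | zero => simp [hx0]
    | succ k => exact (hpos _ (Nat.succ_le_succ (Nat.zero_le _))).le
  set R := |ρ| with hRdef
  have hR0 : 0 ≤ R := abs_nonneg _
  have hρR : -R ≤ ρ ∧ ρ ≤ R := ⟨neg_abs_le ρ, le_abs_self ρ⟩
  have hΔ : ∀ n : ℕ, -R ≤ ρ * (1 - (-1:ℝ)^n) / 2 ∧ ρ * (1 - (-1:ℝ)^n) / 2 ≤ R := by
    intro n
    rcases Nat.even_or_odd n with h | h
    · rw [h.neg_one_pow]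
      constructor <;> linarith [hρR.1, hρR.2]
    · rw [h.neg_one_pow]
      constructor <;> linarith [hρR.1, hρR.2]
  -- upper bound on x
  have hub : ∀ n, 1 ≤ n → x n ≤ Real.sqrt ((n:ℝ) + R) := by
    intro n hn
    have h := hrec n hn
    have hxx : x n ^ 2 ≤ (n:ℝ) + R := by
      nlinarith [hxnn (n+1), hxnn (n-1), (hΔ n).2, (hpos n hn).le]
    exact (Real.le_sqrt (hxnn n) (by positivity)).mpr hxx
  set c : ℕ → ℝ := fun n => x n / Real.sqrt n with hcdef
  have hcnn : ∀ n, 0 ≤ c n := fun n => div_nonneg (hxnn n) (Real.sqrt_nonneg _)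
  set B : ℝ := Real.sqrt (1 + R) with hBdef
  have hcB : ∀ n, c n ≤ B := by
    intro n
    cases n with
    | zero =>
      have h : c 0 = 0 := by simp [hcdef, hx0]
      rw [h, hBdef]; positivity
    | succ k =>
      have hn1 : 1 ≤ k + 1 := Nat.succ_le_succ (Nat.zero_le _)
      have hn0 : (0:ℝ) < ((k+1:ℕ):ℝ) := by exact_mod_cast Nat.succ_pos k
      have hs0 : 0 < Real.sqrt ((k+1:ℕ):ℝ) := Real.sqrt_pos.mpr hn0
      have h1 : c (k+1) ≤ Real.sqrt (((k+1:ℕ):ℝ) + R) / Real.sqrt ((k+1:ℕ):ℝ) := by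
        simp only [hcdef]
        gcongr
        exact hub (k+1) hn1
      have h2 : Real.sqrt (((k+1:ℕ):ℝ) + R) / Real.sqrt ((k+1:ℕ):ℝ)
          = Real.sqrt ((((k+1:ℕ):ℝ) + R) / ((k+1:ℕ):ℝ)) :=
        (Real.sqrt_div (by positivity) _).symm
      have h3 : (((k+1:ℕ):ℝ) + R) / ((k+1:ℕ):ℝ) ≤ 1 + R := by
        rw [div_le_iff₀ hn0]
        have : (1:ℝ) ≤ ((k+1:ℕ):ℝ) := by exact_mod_cast hn1
        nlinarith
      calc c (k+1) ≤ Real.sqrt (((k+1:ℕ):ℝ) + R) / Real.sqrt ((k+1:ℕ):ℝ) := h1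
        _ = Real.sqrt ((((k+1:ℕ):ℝ) + R) / ((k+1:ℕ):ℝ)) := h2
        _ ≤ B := Real.sqrt_le_sqrt h3
  have hbdle : IsBoundedUnder (· ≤ ·) atTop c := isBoundedUnder_of ⟨B, hcB⟩
  have hbdge : IsBoundedUnder (· ≥ ·) atTop c := isBoundedUnder_of ⟨0, hcnn⟩
  set S : ℝ := limsup c atTop with hSdef
  set I : ℝ := liminf c atTop with hIdef
  have hI0 : 0 ≤ I := le_liminf_of_le hbdle.isCoboundedUnder_ge (Eventually.of_forall hcnn)
  have hIS : I ≤ S := liminf_le_limsup hbdle hbdge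
  have hS0 : 0 ≤ S := hI0.trans hIS
  -- key algebraic identity
  have hkey : ∀ n : ℕ, 1 ≤ n →
      c n * (c n + (x (n+1) + x (n-1)) / Real.sqrt n)
        = ((n:ℝ) + ρ * (1 - (-1:ℝ)^n) / 2) / n := by
    intro n hn
    have hn0 : (0:ℝ) < (n:ℝ) := by exact_mod_cast hn
    have hs : Real.sqrt n * Real.sqrt n = (n:ℝ) := Real.mul_self_sqrt hn0.le
    have hs0 : Real.sqrt (n:ℝ) ≠ 0 := (Real.sqrt_pos.mpr hn0).ne'
    have h := hrec n hn
    simp only [hcdef]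
    field_simp
    linear_combination (2*(n:ℝ)) * h + (-2*(n:ℝ) - ρ*(1-(-1:ℝ)^n)) * hs
  -- eventual bounds on the RHS ratio
  have hf_ev : ∀ ε : ℝ, 0 < ε → ∀ᶠ n : ℕ in atTop,
      1 - ε ≤ ((n:ℝ) + ρ * (1 - (-1:ℝ)^n) / 2) / n ∧
      ((n:ℝ) + ρ * (1 - (-1:ℝ)^n) / 2) / n ≤ 1 + ε := by
    intro ε hε
    filter_upwards [eventually_ge_atTop (max 1 (Nat.ceil (R/ε)))] with n hn
    have hn1 : 1 ≤ n := le_trans (le_max_left _ _) hn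
    have hn0 : (0:ℝ) < (n:ℝ) := by exact_mod_cast hn1
    have hnc : R / ε ≤ (n:ℝ) := by
      have : (Nat.ceil (R/ε) : ℝ) ≤ n := by exact_mod_cast le_trans (le_max_right _ _) hn
      exact le_trans (Nat.le_ceil _) this
    have hRn : R ≤ ε * n := by rw [div_le_iff₀ hε] at hnc; linarith
    obtain ⟨h1, h2⟩ := hΔ n
    constructor
    · rw [le_div_iff₀ hn0]; nlinarith
    · rw [div_le_iff₀ hn0]; nlinarith
  -- shifting eventual statements
  have hshift1 : ∀ {p : ℕ → Prop}, (∀ᶠ n in atTop, p n) → ∀ᶠ n : ℕ in atTop, p (n+1) :=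
    fun h => (tendsto_add_atTop_nat 1).eventually h
  have hshift2 : ∀ {p : ℕ → Prop}, (∀ᶠ n in atTop, p n) → ∀ᶠ n : ℕ in atTop, p (n-1) :=
    fun h => (tendsto_sub_atTop_nat 1).eventually h
  -- upper bound on x m from limsup
  have hxub : ∀ (ε : ℝ), 0 < ε → 0 ≤ S + ε → ∀ m : ℕ, c m < S + ε →
      x m ≤ (S + ε) * Real.sqrt m := by
    intro ε hε hSε m hm
    cases m with
    | zero => simp [hx0]
    | succ k =>
      have hs0 : 0 < Real.sqrt ((k+1:ℕ):ℝ) :=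
        Real.sqrt_pos.mpr (by exact_mod_cast Nat.succ_pos k)
      have h' : x (k+1) / Real.sqrt ((k+1:ℕ):ℝ) < S + ε := hm
      rw [div_lt_iff₀ hs0] at h'
      linarith
  -- Step B : 1 ≤ I * (I + 2 * S)
  have claimB : ∀ ε : ℝ, 0 < ε → 1 - ε ≤ (I + ε) * ((I + ε) + (S + ε) * (2 + ε)) := by
    intro ε hε
    have hSε : 0 ≤ S + ε := by linarith
    have hev : ∀ᶠ n : ℕ in atTop,
        (1 ≤ n ∧ c (n+1) < S + ε ∧ c (n-1) < S + ε) ∧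
        Real.sqrt ((n:ℝ)+1) ≤ (1+ε) * Real.sqrt n ∧
        (1 - ε ≤ ((n:ℝ) + ρ * (1 - (-1:ℝ)^n) / 2) / n ∧
         ((n:ℝ) + ρ * (1 - (-1:ℝ)^n) / 2) / n ≤ 1 + ε) := by
      have e1 : ∀ᶠ n : ℕ in atTop, c n < S + ε :=
        eventually_lt_of_limsup_lt (by linarith) hbdle
      exact ((eventually_ge_atTop 1).and ((hshift1 e1).and (hshift2 e1))).and
        ((dPI_sqrt_succ_le hε).and (hf_ev ε hε))
    obtain ⟨n, hcn, ⟨hn1, hc1, hc2⟩, hsq, hf1, hf2⟩ :=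
      ((frequently_lt_of_liminf_lt hbdle.isCoboundedUnder_ge
        (by linarith : I < I + ε)).and_eventually hev).exists
    have hs0 : (0:ℝ) < Real.sqrt n := Real.sqrt_pos.mpr (by exact_mod_cast hn1)
    have hA : x (n+1) ≤ (S+ε) * ((1+ε) * Real.sqrt n) := by
      have h1 := hxub ε hε hSε (n+1) hc1
      have h2 : Real.sqrt ((n+1:ℕ):ℝ) = Real.sqrt ((n:ℝ)+1) := by push_cast; ring_nf
      calc x (n+1) ≤ (S+ε) * Real.sqrt ((n+1:ℕ):ℝ) := h1
        _ = (S+ε) * Real.sqrt ((n:ℝ)+1) := by rw [h2]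
        _ ≤ (S+ε) * ((1+ε) * Real.sqrt n) := mul_le_mul_of_nonneg_left hsq hSε
    have hB2 : x (n-1) ≤ (S+ε) * Real.sqrt n := by
      have h1 := hxub ε hε hSε (n-1) hc2
      have h2 : Real.sqrt (((n-1:ℕ)):ℝ) ≤ Real.sqrt n := by
        apply Real.sqrt_le_sqrt
        exact_mod_cast Nat.sub_le n 1
      calc x (n-1) ≤ (S+ε) * Real.sqrt ((n-1:ℕ):ℝ) := h1
        _ ≤ (S+ε) * Real.sqrt n := mul_le_mul_of_nonneg_left h2 hSε
    have hD : (x (n+1) + x (n-1)) / Real.sqrt n ≤ (S+ε)*(2+ε) := by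
      rw [div_le_iff₀ hs0]; nlinarith
    have hD0 : 0 ≤ (x (n+1) + x (n-1)) / Real.sqrt n :=
      div_nonneg (by linarith [hxnn (n+1), hxnn (n-1)]) hs0.le
    have hk := hkey n hn1
    have hIε : 0 ≤ I + ε := by linarith
    have step1 : c n * (c n + (x (n+1) + x (n-1)) / Real.sqrt n)
        ≤ (I + ε) * (c n + (x (n+1) + x (n-1)) / Real.sqrt n) :=
      mul_le_mul_of_nonneg_right hcn.le (by linarith [hcnn n, hD0])
    have step2 : (I + ε) * (c n + (x (n+1) + x (n-1)) / Real.sqrt n)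
        ≤ (I + ε) * ((I+ε) + (S+ε)*(2+ε)) :=
      mul_le_mul_of_nonneg_left (by linarith [hcn.le, hD]) hIε
    linarith [hk, hf1, step1, step2]
  have stepB : 1 ≤ I * (I + 2*S) := by
    have hcont : Tendsto (fun ε : ℝ => (I+ε) * ((I+ε) + (S+ε)*(2+ε))) (𝓝[>] (0:ℝ))
        (𝓝 (I * (I + 2*S))) := by
      have h0 : Tendsto (fun ε : ℝ => (I+ε) * ((I+ε) + (S+ε)*(2+ε))) (𝓝 (0:ℝ))
          (𝓝 ((I+0) * ((I+0) + (S+0)*(2+0)))) :=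
        (Continuous.tendsto (by fun_prop) 0)
      have heq : I * (I + 2*S) = (I+0) * ((I+0) + (S+0)*(2+0)) := by ring
      rw [heq]
      exact h0.mono_left nhdsWithin_le_nhds
    have hone : Tendsto (fun ε : ℝ => 1 - ε) (𝓝[>] (0:ℝ)) (𝓝 1) := by
      have h0 : Tendsto (fun ε : ℝ => 1 - ε) (𝓝 (0:ℝ)) (𝓝 (1 - 0)) :=
        (Continuous.tendsto (by fun_prop) 0)
      simpa using h0.mono_left nhdsWithin_le_nhds
    exact le_of_tendsto_of_tendsto hone hcont
      (eventually_mem_nhdsWithin.mono (fun ε hε => claimB ε hε))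
  have hIpos : 0 < I := by
    rcases hI0.lt_or_eq with h | h
    · exact h
    · exfalso
      rw [← h] at stepB
      norm_num at stepB
  -- Step A : S * (S + 2 * I) ≤ 1
  have claimA : ∀ ε : ℝ, 0 < ε → ε < I → ε < 1 →
      (S - ε) * ((S - ε) + (I - ε)*(2 - ε)) ≤ 1 + ε := by
    intro ε hε hεI hε1
    have hIε : 0 ≤ I - ε := by linarith
    have hev : ∀ᶠ n : ℕ in atTop,
        (2 ≤ n ∧ I - ε < c (n+1) ∧ I - ε < c (n-1)) ∧
        (1 - ε) * Real.sqrt n ≤ Real.sqrt ((n:ℝ) - 1) ∧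
        (1 - ε ≤ ((n:ℝ) + ρ * (1 - (-1:ℝ)^n) / 2) / n ∧
         ((n:ℝ) + ρ * (1 - (-1:ℝ)^n) / 2) / n ≤ 1 + ε) := by
      have e1 : ∀ᶠ n : ℕ in atTop, I - ε < c n :=
        eventually_lt_of_lt_liminf (by linarith) hbdge
      exact ((eventually_ge_atTop 2).and ((hshift1 e1).and (hshift2 e1))).and
        ((dPI_sqrt_pred_ge hε).and (hf_ev ε hε))
    obtain ⟨n, hcn, ⟨hn2, hc1, hc2⟩, hsq, hf1, hf2⟩ :=
      ((frequently_lt_of_lt_limsup hbdge.isCoboundedUnder_le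
        (by linarith : S - ε < S)).and_eventually hev).exists
    have hn1 : 1 ≤ n := le_trans (by norm_num) hn2
    have hs0 : (0:ℝ) < Real.sqrt n := Real.sqrt_pos.mpr (by exact_mod_cast hn1)
    have hA : (I - ε) * Real.sqrt n ≤ x (n+1) := by
      have hsp : (0:ℝ) < Real.sqrt ((n+1:ℕ):ℝ) :=
        Real.sqrt_pos.mpr (by exact_mod_cast Nat.succ_pos n)
      have h' : I - ε < x (n+1) / Real.sqrt ((n+1:ℕ):ℝ) := hc1
      rw [lt_div_iff₀ hsp] at h'
      have hmono : Real.sqrt (n:ℝ) ≤ Real.sqrt ((n+1:ℕ):ℝ) :=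
        Real.sqrt_le_sqrt (by push_cast; linarith)
      nlinarith
    have hB2 : (I - ε) * ((1 - ε) * Real.sqrt n) ≤ x (n-1) := by
      have hm1 : (0:ℝ) < ((n-1:ℕ):ℝ) := by
        have : 1 ≤ n - 1 := by omega
        exact_mod_cast Nat.lt_of_lt_of_le Nat.zero_lt_one this
      have hsp : (0:ℝ) < Real.sqrt ((n-1:ℕ):ℝ) := Real.sqrt_pos.mpr hm1
      have h' : I - ε < x (n-1) / Real.sqrt ((n-1:ℕ):ℝ) := hc2
      rw [lt_div_iff₀ hsp] at h'
      have hcast : ((n-1:ℕ):ℝ) = (n:ℝ) - 1 := by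
        have h1n : (1:ℕ) ≤ n := hn1
        push_cast [h1n]
        ring
      rw [hcast] at h'
      nlinarith [mul_le_mul_of_nonneg_left hsq hIε]
    have hD : (I - ε) * (2 - ε) ≤ (x (n+1) + x (n-1)) / Real.sqrt n := by
      rw [le_div_iff₀ hs0]; nlinarith
    have hD0 : 0 ≤ (x (n+1) + x (n-1)) / Real.sqrt n :=
      div_nonneg (by linarith [hxnn (n+1), hxnn (n-1)]) hs0.le
    have hk := hkey n hn1
    have hSε : 0 ≤ S - ε := by linarith
    have step1 : (S - ε) * ((S - ε) + (I - ε)*(2 - ε))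
        ≤ (S - ε) * (c n + (x (n+1) + x (n-1)) / Real.sqrt n) :=
      mul_le_mul_of_nonneg_left (by linarith [hcn.le, hD]) hSε
    have step2 : (S - ε) * (c n + (x (n+1) + x (n-1)) / Real.sqrt n)
        ≤ c n * (c n + (x (n+1) + x (n-1)) / Real.sqrt n) :=
      mul_le_mul_of_nonneg_right hcn.le (by linarith [hcnn n, hD0])
    linarith [hk, hf2, step1, step2]
  have stepA : S * (S + 2*I) ≤ 1 := by
    have hcont : Tendsto (fun ε : ℝ => (S-ε) * ((S-ε) + (I-ε)*(2-ε))) (𝓝[>] (0:ℝ))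
        (𝓝 (S * (S + 2*I))) := by
      have h0 : Tendsto (fun ε : ℝ => (S-ε) * ((S-ε) + (I-ε)*(2-ε))) (𝓝 (0:ℝ))
          (𝓝 ((S-0) * ((S-0) + (I-0)*(2-0)))) :=
        (Continuous.tendsto (by fun_prop) 0)
      have heq : S * (S + 2*I) = (S-0) * ((S-0) + (I-0)*(2-0)) := by ring
      rw [heq]
      exact h0.mono_left nhdsWithin_le_nhds
    have hone : Tendsto (fun ε : ℝ => 1 + ε) (𝓝[>] (0:ℝ)) (𝓝 1) := by
      have h0 : Tendsto (fun ε : ℝ => 1 + ε) (𝓝 (0:ℝ)) (𝓝 (1 + 0)) :=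
        (Continuous.tendsto (by fun_prop) 0)
      simpa using h0.mono_left nhdsWithin_le_nhds
    refine le_of_tendsto_of_tendsto hcont hone
      (Filter.eventually_of_mem
        (Ioo_mem_nhdsGT_of_mem ⟨le_refl (0:ℝ), lt_min hIpos one_pos⟩) ?_)
    intro ε hε
    exact claimA ε hε.1 ((lt_min_iff.mp hε.2).1) ((lt_min_iff.mp hε.2).2)
  -- conclude S = I = 1/√3
  have hSI : S = I := by
    have h1 : S ≤ I := by nlinarith [stepA, stepB, hIpos, hIS]
    exact le_antisymm h1 hIS
  rw [← hSI] at stepB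
  have hS2 : S^2 = 1/3 := by
    have h3 : 3 * S^2 ≤ 1 := by nlinarith [stepA, hSI]
    have h4 : 1 ≤ 3 * S^2 := by nlinarith [stepB]
    linarith
  have hSval : S = 1 / Real.sqrt 3 := by
    have h1 : S = Real.sqrt (1/3) := by
      rw [← Real.sqrt_sq hS0, hS2]
    rw [h1, one_div, one_div, ← Real.sqrt_inv]
  have hIval : I = 1 / Real.sqrt 3 := by rw [← hSI]; exact hSval
  exact tendsto_of_liminf_eq_limsup hIval hSval hbdle hbdge
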